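/- Let n ≥ 1 be an integer, let β_n = (n + sqrt(n^2+4))/2 be the n-th metallic mean (the positive root of x^2 − n x − 1), and let M be the square matrix indexed by T_n × T_n whose (b,a) entry is the number of positions at which the tile b occurs in the pattern ω_n(a). Then β_n^2 is an eigenvalue of M, and every complex eigenvalue μ of M satisfies |μ| ≤ β_n^2; that is, β_n^2 is the Perron–Frobenius dominant eigenvalue of the incidence matrix of ω_n. -/

import Mathlib

structure WangTile (C : Type*) where
  right : C
  top : C
  left : C
  bottom : C
deriving DecidableEq

abbrev Lbl : Type := ℤ × ℤ × ℤ

def Vn (n : ℤ) : Set Lbl :=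
  {v | 0 ≤ v.1 ∧ v.1 ≤ v.2.1 ∧ v.2.1 ≤ 1 ∧ v.2.1 ≤ v.2.2 ∧ v.2.2 ≤ n + 1}

def hatT {C : Type*} (t : WangTile C) : WangTile C :=
  ⟨t.top, t.right, t.bottom, t.left⟩

def whiteTiles (n : ℤ) : Set (WangTile Lbl) :=
  {t | ∃ i j : ℤ, 1 ≤ i ∧ i ≤ n ∧ 1 ≤ j ∧ j ≤ n ∧
    t = ⟨(1, 1, i + 1), (1, 1, j + 1), (1, 1, i), (1, 1, j)⟩}

def blueH (n : ℤ) : Set (WangTile Lbl) :=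
  {t | ∃ i : ℤ, 0 ≤ i ∧ i ≤ n ∧ t = ⟨(0, 0, i + 1), (1, 1, 1), (0, 0, i), (1, 1, n)⟩}

def greenH (n : ℤ) : Set (WangTile Lbl) :=
  {t | ∃ i : ℤ, 0 ≤ i ∧ i ≤ n ∧ t = ⟨(0, 1, i + 1), (1, 1, 1), (0, 0, i), (1, 1, n + 1)⟩}

def yellowH (n : ℤ) : Set (WangTile Lbl) :=
  {t | ∃ i : ℤ, 1 ≤ i ∧ i ≤ n ∧ t = ⟨(0, 1, i + 1), (1, 1, 2), (0, 1, i), (1, 1, n + 1)⟩}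

def antiH (n : ℤ) : Set (WangTile Lbl) :=
  {t | ∃ i : ℤ, 1 ≤ i ∧ i ≤ n ∧ t = ⟨(0, 0, i + 1), (1, 1, 2), (0, 1, i), (1, 1, n)⟩}

def junctionTile (n k l r s : ℤ) : WangTile Lbl :=
  ⟨(0, k, l), (0, r, s), (0, s, r + n), (0, l, k + n)⟩

def jPairs : Set (ℤ × ℤ) := {(0, 0), (0, 1), (1, 1)}

def junctions (n : ℤ) : Set (WangTile Lbl) :=
  {t | ∃ k l r s : ℤ, (k, l) ∈ jPairs ∧ (r, s) ∈ jPairs ∧ t = junctionTile n k l r s}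

def Text (n : ℤ) : Set (WangTile Lbl) :=
  whiteTiles n ∪ blueH n ∪ greenH n ∪ yellowH n ∪ antiH n ∪
    hatT '' blueH n ∪ hatT '' greenH n ∪ hatT '' yellowH n ∪ hatT '' antiH n ∪ junctions n

def Dset (n : ℤ) : Set (WangTile Lbl) :=
  {(⟨(0, 0, n + 1), (1, 1, 1), (0, 0, n), (1, 1, n)⟩ : WangTile Lbl),
    hatT (⟨(0, 0, n + 1), (1, 1, 1), (0, 0, n), (1, 1, n)⟩ : WangTile Lbl),
    junctionTile n 0 0 1 1, junctionTile n 1 1 0 0}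

def Tmet (n : ℤ) : Set (WangTile Lbl) :=
  Text n \ (antiH n ∪ hatT '' antiH n ∪ Dset n)

def ValidConfig {C : Type*} (T : Set (WangTile C)) (x : ℤ × ℤ → WangTile C) : Prop :=
  (∀ m, x m ∈ T) ∧
    (∀ m : ℤ × ℤ, (x m).right = (x (m.1 + 1, m.2)).left) ∧
    (∀ m : ℤ × ℤ, (x m).top = (x (m.1, m.2 + 1)).bottom)

def ValidPattern {C : Type*} (T : Set (WangTile C)) (w h : ℕ) (p : ℕ → ℕ → WangTile C) : Prop :=
  (∀ i j, i < w → j < h → p i j ∈ T) ∧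
    (∀ i j, i + 1 < w → j < h → (p i j).right = (p (i + 1) j).left) ∧
    (∀ i j, i < w → j + 1 < h → (p i j).top = (p i (j + 1)).bottom)

def bottomWord {C : Type*} (w : ℕ) (p : ℕ → ℕ → WangTile C) : List C :=
  (List.range w).map fun i => (p i 0).bottom

def topWord {C : Type*} (w h : ℕ) (p : ℕ → ℕ → WangTile C) : List C :=
  (List.range w).map fun i => (p i (h - 1)).top

def leftWord {C : Type*} (h : ℕ) (p : ℕ → ℕ → WangTile C) : List C :=
  (List.range h).map fun j => (p 0 j).left

def rightWord {C : Type*} (w h : ℕ) (p : ℕ → ℕ → WangTile C) : List C :=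
  (List.range h).map fun j => (p (w - 1) j).right

def tau (n : ℤ) (v : Lbl) : List Lbl :=
  if v.1 = v.2.2 then
    (0, v.1 - v.2.1 + 1, n + 1) :: List.replicate (n - v.2.2).toNat (1, 1, n + 1)
  else
    (0, v.1 - v.2.1 + 1, n) ::
      (List.replicate (v.2.2 - v.1 - 1).toNat (1, 1, n) ++
        List.replicate (n + 1 - v.2.2).toNat (1, 1, n + 1))

/-- `q` (of size `w' × h'`) is the image under `ω_n` of the pattern `p` (of size `w × h`)
over the tile set `T`: there are block boundaries `A`, `B` such that each block of `q`
is the unique valid rectangular pattern over `T` whose boundary words are the images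
under `τ_n` of the labels of the corresponding tile of `p`. -/
def IsPatternImage (n : ℤ) (T : Set (WangTile Lbl)) (w h : ℕ)
    (p : ℕ → ℕ → WangTile Lbl) (w' h' : ℕ) (q : ℕ → ℕ → WangTile Lbl) : Prop :=
  ∃ A B : ℕ → ℕ, A 0 = 0 ∧ B 0 = 0 ∧ A w = w' ∧ B h = h' ∧
    (∀ k, k < w → A k < A (k + 1)) ∧ (∀ k, k < h → B k < B (k + 1)) ∧
    ∀ l1 l2, l1 < w → l2 < h →
      ValidPattern T (A (l1 + 1) - A l1) (B (l2 + 1) - B l2)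
        (fun i j => q (A l1 + i) (B l2 + j)) ∧
      rightWord (A (l1 + 1) - A l1) (B (l2 + 1) - B l2)
        (fun i j => q (A l1 + i) (B l2 + j)) = tau n (p l1 l2).right ∧
      topWord (A (l1 + 1) - A l1) (B (l2 + 1) - B l2)
        (fun i j => q (A l1 + i) (B l2 + j)) = tau n (p l1 l2).top ∧
      leftWord (B (l2 + 1) - B l2) (fun i j => q (A l1 + i) (B l2 + j)) =
        tau n (p l1 l2).left ∧
      bottomWord (A (l1 + 1) - A l1) (fun i j => q (A l1 + i) (B l2 + j)) =
        tau n (p l1 l2).bottom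

/-- `IterImage n T m a w h q` : `q` (of size `w × h`) is the pattern `ω_n^m(a)`. -/
def IterImage (n : ℤ) (T : Set (WangTile Lbl)) :
    ℕ → WangTile Lbl → ℕ → ℕ → (ℕ → ℕ → WangTile Lbl) → Prop
  | 0, a, w, h, q => w = 1 ∧ h = 1 ∧ q 0 0 = a
  | m + 1, a, w, h, q =>
      ∃ (w' h' : ℕ) (p : ℕ → ℕ → WangTile Lbl),
        IterImage n T m a w' h' p ∧ IsPatternImage n T w' h' p w h q

/-- The `n`-th metallic mean, the positive root of `x² - n·x - 1`. -/
noncomputable def betaMM (n : ℤ) : ℝ := ((n : ℝ) + Real.sqrt ((n : ℝ) ^ 2 + 4)) / 2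


section Chunk1

lemma betaMM_ge (n : ℤ) (hn : 1 ≤ n) : (n : ℝ) ≤ betaMM n := by
  have h0 : (0:ℝ) ≤ (n:ℝ) := by exact_mod_cast (by omega : (0:ℤ) ≤ n)
  have h1 : (n:ℝ) ≤ Real.sqrt ((n:ℝ)^2 + 4) := by
    have := Real.sqrt_le_sqrt (by linarith : (n:ℝ)^2 ≤ (n:ℝ)^2 + 4)
    rwa [Real.sqrt_sq h0] at this
  unfold betaMM; linarith

lemma betaMM_sq (n : ℤ) (hn : 1 ≤ n) : (betaMM n)^2 = n * betaMM n + 1 := by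
  have h4 : (0:ℝ) ≤ (n:ℝ)^2 + 4 := by positivity
  have hs := Real.sq_sqrt h4
  unfold betaMM
  nlinarith [hs]

noncomputable def fw (n : ℤ) (v : Lbl) : ℝ := if v.1 = 0 then betaMM n - n + 1 else 1

lemma fw_pos (n : ℤ) (hn : 1 ≤ n) (v : Lbl) : 0 < fw n v := by
  unfold fw
  split
  · have := betaMM_ge n hn; linarith
  · norm_num

lemma tau_map_sum (n : ℤ) (hn : 1 ≤ n) (v : Lbl) (hx0 : 0 ≤ v.1) (hx1 : v.1 ≤ 1)
    (hxz : v.1 ≤ v.2.2) (hz : v.2.2 ≤ n + 1) :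
    ((tau n v).map (fw n)).sum = betaMM n * fw n v := by
  have hb := betaMM_ge n hn
  have hsq := betaMM_sq n hn
  have hn1 : (1:ℝ) ≤ (n:ℝ) := by exact_mod_cast hn
  obtain ⟨x, y, z⟩ := v
  simp only at hx0 hx1 hxz hz
  unfold tau
  dsimp only
  by_cases h : x = z
  · rw [if_pos h]
    simp only [List.map_cons, List.map_replicate, List.sum_cons, List.sum_replicate,
      nsmul_eq_mul, mul_one]
    have e1 : ((n - z).toNat : ℝ) = (n:ℝ) - z := by
      have : ((n - z).toNat : ℤ) = n - z := Int.toNat_of_nonneg (by omega)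
      exact_mod_cast this
    rw [e1]
    rcases (by omega : x = 0 ∨ x = 1) with hx | hx
    · have hz0 : z = 0 := by omega
      norm_num [fw, hx, hz0]
      nlinarith [hsq]
    · have hz0 : z = 1 := by omega
      norm_num [fw, hx, hz0]
      all_goals push_cast
      all_goals linarith
  · rw [if_neg h]
    simp only [List.map_cons, List.map_append, List.map_replicate, List.sum_cons,
      List.sum_append, List.sum_replicate, nsmul_eq_mul, mul_one]
    have e1 : ((z - x - 1).toNat : ℝ) = (z:ℝ) - x - 1 := by
      have : ((z - x - 1).toNat : ℤ) = z - x - 1 := Int.toNat_of_nonneg (by omega)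
      exact_mod_cast this
    have e2 : ((n + 1 - z).toNat : ℝ) = (n:ℝ) + 1 - z := by
      have : ((n + 1 - z).toNat : ℤ) = n + 1 - z := Int.toNat_of_nonneg (by omega)
      exact_mod_cast this
    rw [e1, e2]
    rcases (by omega : x = 0 ∨ x = 1) with hx | hx
    · norm_num [fw, hx]
      all_goals push_cast
      all_goals nlinarith [hsq]
    · norm_num [fw, hx]
      all_goals push_cast
      all_goals linarith

lemma tau_length (n x y z : ℤ) (hn : 1 ≤ n) (hx0 : 0 ≤ x) (hx1 : x ≤ 1)
    (hxz : x ≤ z) (hz : z ≤ n + 1) :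
    (tau n (x, y, z)).length = (n + 1 - x).toNat := by
  unfold tau
  dsimp only
  split_ifs <;> simp <;> omega

lemma tau_getElem (n x y z : ℤ) (hn : 1 ≤ n) (hx0 : 0 ≤ x) (hx1 : x ≤ 1)
    (hxz : x ≤ z) (hz : z ≤ n + 1) (k : ℕ) (hk : k < (tau n (x, y, z)).length) :
    (tau n (x, y, z))[k] =
      if k = 0 then ((0:ℤ), x - y + 1, if x = z then n + 1 else n)
      else if (k : ℤ) ≤ z - x - 1 then ((1:ℤ), (1:ℤ), n) else ((1:ℤ), (1:ℤ), n + 1) := by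
  rcases Nat.eq_zero_or_pos k with rfl | hkpos
  · rw [if_pos rfl]
    unfold tau
    dsimp only
    by_cases h : x = z
    · simp only [if_pos h]; rfl
    · simp only [if_neg h]; rfl
  · obtain ⟨m, rfl⟩ : ∃ m, k = m + 1 := ⟨k - 1, by omega⟩
    rw [if_neg (by omega)]
    unfold tau at hk ⊢
    dsimp only at hk ⊢
    by_cases h : x = z
    · simp only [if_pos h] at hk ⊢
      rw [if_neg (by push_cast; omega : ¬ ((m + 1 : ℕ) : ℤ) ≤ z - x - 1)]
      simp only [List.getElem_cons_succ, List.getElem_replicate]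
    · simp only [if_neg h] at hk ⊢
      simp only [List.length_cons, List.length_append, List.length_replicate] at hk
      simp only [List.getElem_cons_succ]
      by_cases hm : ((m + 1 : ℕ) : ℤ) ≤ z - x - 1
      · rw [if_pos hm, List.getElem_append_left (by simp only [List.length_replicate]; push_cast at hm ⊢; omega),
          List.getElem_replicate]
      · rw [if_neg hm, List.getElem_append_right (by simp only [List.length_replicate]; push_cast at hm ⊢; omega),
          List.getElem_replicate]

end Chunk1

section Chunk2

def blueT (n m : ℤ) : WangTile Lbl := ⟨(0,0,m+1),(1,1,1),(0,0,m),(1,1,n)⟩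
def greenT (n m : ℤ) : WangTile Lbl := ⟨(0,1,m+1),(1,1,1),(0,0,m),(1,1,n+1)⟩
def yellowT (n m : ℤ) : WangTile Lbl := ⟨(0,1,m+1),(1,1,2),(0,1,m),(1,1,n+1)⟩
def whiteT (a c : ℤ) : WangTile Lbl := ⟨(1,1,a+1),(1,1,c+1),(1,1,a),(1,1,c)⟩

lemma notRemoved_of (n : ℤ) (t : WangTile Lbl)
    (h1 : t ∉ antiH n) (h2 : t ∉ hatT '' antiH n) (h3 : t ∉ Dset n) :
    t ∉ antiH n ∪ hatT '' antiH n ∪ Dset n := by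
  intro h
  rcases h with (h | h) | h
  exacts [h1 h, h2 h, h3 h]

lemma whiteT_mem {n a c : ℤ} (h1 : 1 ≤ a) (h2 : a ≤ n) (h3 : 1 ≤ c) (h4 : c ≤ n) :
    whiteT a c ∈ Tmet n := by
  refine ⟨?_, notRemoved_of n _ ?_ ?_ ?_⟩
  · refine Or.inl (Or.inl (Or.inl (Or.inl (Or.inl (Or.inl (Or.inl (Or.inl (Or.inl ?_))))))))
    exact ⟨a, c, h1, h2, h3, h4, rfl⟩
  · rintro ⟨i, _, _, hi⟩
    simp only [whiteT, WangTile.mk.injEq, Prod.mk.injEq] at hi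
    omega
  · rintro ⟨x, ⟨i, _, _, rfl⟩, hx⟩
    simp only [whiteT, hatT, WangTile.mk.injEq, Prod.mk.injEq] at hx
    omega
  · intro h
    simp only [Dset, Set.mem_insert_iff, Set.mem_singleton_iff, whiteT, hatT, junctionTile,
      WangTile.mk.injEq, Prod.mk.injEq] at h
    omega

lemma blueT_mem {n m : ℤ} (h1 : 0 ≤ m) (h2 : m ≤ n - 1) : blueT n m ∈ Tmet n := by
  refine ⟨?_, notRemoved_of n _ ?_ ?_ ?_⟩
  · refine Or.inl (Or.inl (Or.inl (Or.inl (Or.inl (Or.inl (Or.inl (Or.inl (Or.inr ?_))))))))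
    exact ⟨m, h1, by omega, rfl⟩
  · rintro ⟨i, _, _, hi⟩
    simp only [blueT, WangTile.mk.injEq, Prod.mk.injEq] at hi
    omega
  · rintro ⟨x, ⟨i, _, _, rfl⟩, hx⟩
    simp only [blueT, hatT, WangTile.mk.injEq, Prod.mk.injEq] at hx
    omega
  · intro h
    simp only [Dset, Set.mem_insert_iff, Set.mem_singleton_iff, blueT, hatT, junctionTile,
      WangTile.mk.injEq, Prod.mk.injEq] at h
    omega

lemma greenT_mem {n m : ℤ} (h1 : 0 ≤ m) (h2 : m ≤ n) : greenT n m ∈ Tmet n := by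
  refine ⟨?_, notRemoved_of n _ ?_ ?_ ?_⟩
  · refine Or.inl (Or.inl (Or.inl (Or.inl (Or.inl (Or.inl (Or.inl (Or.inr ?_)))))))
    exact ⟨m, h1, h2, rfl⟩
  · rintro ⟨i, _, _, hi⟩
    simp only [greenT, WangTile.mk.injEq, Prod.mk.injEq] at hi
    omega
  · rintro ⟨x, ⟨i, _, _, rfl⟩, hx⟩
    simp only [greenT, hatT, WangTile.mk.injEq, Prod.mk.injEq] at hx
    omega
  · intro h
    simp only [Dset, Set.mem_insert_iff, Set.mem_singleton_iff, greenT, hatT, junctionTile,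
      WangTile.mk.injEq, Prod.mk.injEq] at h
    omega

lemma yellowT_mem {n m : ℤ} (h1 : 1 ≤ m) (h2 : m ≤ n) : yellowT n m ∈ Tmet n := by
  refine ⟨?_, notRemoved_of n _ ?_ ?_ ?_⟩
  · refine Or.inl (Or.inl (Or.inl (Or.inl (Or.inl (Or.inl (Or.inr ?_))))))
    exact ⟨m, h1, h2, rfl⟩
  · rintro ⟨i, _, _, hi⟩
    simp only [yellowT, WangTile.mk.injEq, Prod.mk.injEq] at hi
    omega
  · rintro ⟨x, ⟨i, _, _, rfl⟩, hx⟩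
    simp only [yellowT, hatT, WangTile.mk.injEq, Prod.mk.injEq] at hx
    omega
  · intro h
    simp only [Dset, Set.mem_insert_iff, Set.mem_singleton_iff, yellowT, hatT, junctionTile,
      WangTile.mk.injEq, Prod.mk.injEq] at h
    omega

lemma hatBlueT_mem {n m : ℤ} (h1 : 0 ≤ m) (h2 : m ≤ n - 1) : hatT (blueT n m) ∈ Tmet n := by
  refine ⟨?_, notRemoved_of n _ ?_ ?_ ?_⟩
  · refine Or.inl (Or.inl (Or.inl (Or.inl (Or.inr ?_))))
    exact ⟨blueT n m, ⟨m, h1, by omega, rfl⟩, rfl⟩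
  · rintro ⟨i, _, _, hi⟩
    simp only [blueT, hatT, WangTile.mk.injEq, Prod.mk.injEq] at hi
    omega
  · rintro ⟨x, ⟨i, _, _, rfl⟩, hx⟩
    simp only [blueT, hatT, WangTile.mk.injEq, Prod.mk.injEq] at hx
    omega
  · intro h
    simp only [Dset, Set.mem_insert_iff, Set.mem_singleton_iff, blueT, hatT, junctionTile,
      WangTile.mk.injEq, Prod.mk.injEq] at h
    omega

lemma hatGreenT_mem {n m : ℤ} (h1 : 0 ≤ m) (h2 : m ≤ n) : hatT (greenT n m) ∈ Tmet n := by
  refine ⟨?_, notRemoved_of n _ ?_ ?_ ?_⟩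
  · refine Or.inl (Or.inl (Or.inl (Or.inr ?_)))
    exact ⟨greenT n m, ⟨m, h1, h2, rfl⟩, rfl⟩
  · rintro ⟨i, _, _, hi⟩
    simp only [greenT, hatT, WangTile.mk.injEq, Prod.mk.injEq] at hi
    omega
  · rintro ⟨x, ⟨i, _, _, rfl⟩, hx⟩
    simp only [greenT, hatT, WangTile.mk.injEq, Prod.mk.injEq] at hx
    omega
  · intro h
    simp only [Dset, Set.mem_insert_iff, Set.mem_singleton_iff, greenT, hatT, junctionTile,
      WangTile.mk.injEq, Prod.mk.injEq] at h
    omega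

lemma hatYellowT_mem {n m : ℤ} (h1 : 1 ≤ m) (h2 : m ≤ n) : hatT (yellowT n m) ∈ Tmet n := by
  refine ⟨?_, notRemoved_of n _ ?_ ?_ ?_⟩
  · refine Or.inl (Or.inl (Or.inr ?_))
    exact ⟨yellowT n m, ⟨m, h1, h2, rfl⟩, rfl⟩
  · rintro ⟨i, _, _, hi⟩
    simp only [yellowT, hatT, WangTile.mk.injEq, Prod.mk.injEq] at hi
    omega
  · rintro ⟨x, ⟨i, _, _, rfl⟩, hx⟩
    simp only [yellowT, hatT, WangTile.mk.injEq, Prod.mk.injEq] at hx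
    omega
  · intro h
    simp only [Dset, Set.mem_insert_iff, Set.mem_singleton_iff, yellowT, hatT, junctionTile,
      WangTile.mk.injEq, Prod.mk.injEq] at h
    omega

lemma junctionT_mem {n k l r s : ℤ} (hn : 1 ≤ n) (hkl : (k, l) ∈ jPairs) (hrs : (r, s) ∈ jPairs)
    (hd1 : ¬(k = 0 ∧ l = 0 ∧ r = 1 ∧ s = 1)) (hd2 : ¬(k = 1 ∧ l = 1 ∧ r = 0 ∧ s = 0)) :
    junctionTile n k l r s ∈ Tmet n := by
  simp only [jPairs, Set.mem_insert_iff, Set.mem_singleton_iff, Prod.mk.injEq] at hkl hrs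
  refine ⟨?_, notRemoved_of n _ ?_ ?_ ?_⟩
  · exact Or.inr ⟨k, l, r, s, by simp [jPairs]; omega, by simp [jPairs]; omega, rfl⟩
  · rintro ⟨i, _, _, hi⟩
    simp only [junctionTile, WangTile.mk.injEq, Prod.mk.injEq] at hi
    omega
  · rintro ⟨x, ⟨i, _, _, rfl⟩, hx⟩
    simp only [junctionTile, hatT, WangTile.mk.injEq, Prod.mk.injEq] at hx
    omega
  · intro h
    simp only [Dset, Set.mem_insert_iff, Set.mem_singleton_iff, hatT, junctionTile,
      WangTile.mk.injEq, Prod.mk.injEq] at h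
    omega

lemma Tmet_sub_Text {n : ℤ} : Tmet n ⊆ Text n := fun _ h => h.1

lemma fw_invar {n : ℤ} {t : WangTile Lbl} (h : t ∈ Text n) :
    fw n t.left = fw n t.right ∧ fw n t.bottom = fw n t.top := by
  rcases h with ((((((((h | h) | h) | h) | h) | ⟨x, h, rfl⟩) | ⟨x, h, rfl⟩) | ⟨x, h, rfl⟩) | ⟨x, h, rfl⟩) | h
  · obtain ⟨i, j, _, _, _, _, rfl⟩ := h; norm_num [fw, hatT]
  · obtain ⟨i, _, _, rfl⟩ := h; norm_num [fw, hatT]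
  · obtain ⟨i, _, _, rfl⟩ := h; norm_num [fw, hatT]
  · obtain ⟨i, _, _, rfl⟩ := h; norm_num [fw, hatT]
  · obtain ⟨i, _, _, rfl⟩ := h; norm_num [fw, hatT]
  · obtain ⟨i, _, _, rfl⟩ := h; norm_num [fw, hatT]
  · obtain ⟨i, _, _, rfl⟩ := h; norm_num [fw, hatT]
  · obtain ⟨i, _, _, rfl⟩ := h; norm_num [fw, hatT]
  · obtain ⟨i, _, _, rfl⟩ := h; norm_num [fw, hatT]
  · obtain ⟨k, l, r, s, _, _, rfl⟩ := h; norm_num [fw, junctionTile]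

lemma label_bounds {n : ℤ} (hn : 1 ≤ n) {t : WangTile Lbl} (h : t ∈ Text n) :
    (0 ≤ t.left.1 ∧ t.left.1 ≤ 1 ∧ t.left.1 ≤ t.left.2.2 ∧ t.left.2.2 ≤ n + 1) ∧
    (0 ≤ t.bottom.1 ∧ t.bottom.1 ≤ 1 ∧ t.bottom.1 ≤ t.bottom.2.2 ∧ t.bottom.2.2 ≤ n + 1) := by
  rcases h with ((((((((h | h) | h) | h) | h) | ⟨x, h, rfl⟩) | ⟨x, h, rfl⟩) | ⟨x, h, rfl⟩) | ⟨x, h, rfl⟩) | h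
  · obtain ⟨i, j, h1, h2, h3, h4, rfl⟩ := h; dsimp [hatT]; omega
  · obtain ⟨i, h1, h2, rfl⟩ := h; dsimp [hatT]; omega
  · obtain ⟨i, h1, h2, rfl⟩ := h; dsimp [hatT]; omega
  · obtain ⟨i, h1, h2, rfl⟩ := h; dsimp [hatT]; omega
  · obtain ⟨i, h1, h2, rfl⟩ := h; dsimp [hatT]; omega
  · obtain ⟨i, h1, h2, rfl⟩ := h; dsimp [hatT]; omega
  · obtain ⟨i, h1, h2, rfl⟩ := h; dsimp [hatT]; omega
  · obtain ⟨i, h1, h2, rfl⟩ := h; dsimp [hatT]; omega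
  · obtain ⟨i, h1, h2, rfl⟩ := h; dsimp [hatT]; omega
  · obtain ⟨k, l, r, s, hkl, hrs, rfl⟩ := h
    simp only [jPairs, Set.mem_insert_iff, Set.mem_singleton_iff, Prod.mk.injEq] at hkl hrs
    dsimp [junctionTile]; omega

end Chunk2

section Chunk3

def hcellF (n xb yb zb : ℤ) (i : ℕ) : WangTile Lbl :=
  if (i:ℤ) ≤ zb - xb - 1 then blueT n (xb - yb + i)
  else if (i:ℤ) = zb - xb then greenT n (zb - yb)
  else yellowT n (xb - yb + i)

def patF (n xb yb zb xl yl zl : ℤ) (i j : ℕ) : WangTile Lbl :=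
  if i = 0 then
    if j = 0 then
      junctionTile n (if xb = zb then 1 else 0) (xb - yb + 1) (if xl = zl then 1 else 0)
        (xl - yl + 1)
  else hatT (hcellF n xl yl zl j)
  else if j = 0 then hcellF n xb yb zb i
  else whiteT ((if (j:ℤ) ≤ zl - xl then 1 else 2) + i - 1) ((if (i:ℤ) ≤ zb - xb then 1 else 2) + j - 1)

set_option maxHeartbeats 1000000 in
lemma patF_mem (n xb yb zb xl yl zl : ℤ) (hn : 1 ≤ n)
    (hb1 : 0 ≤ xb) (hb2 : xb ≤ yb) (hb3 : yb ≤ 1) (hb4 : yb ≤ zb) (hb5 : zb ≤ n + yb)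
    (hl1 : 0 ≤ xl) (hl2 : xl ≤ yl) (hl3 : yl ≤ 1) (hl4 : yl ≤ zl) (hl5 : zl ≤ n + yl)
    (hwb : zb ≤ n - 1 → xl = 1) (hwl : zl ≤ n - 1 → xb = 1)
    (hkl : xb = zb → yb = xb) (hrs : xl = zl → yl = xl)
    (hj1 : xl = zl → yb = xb) (hj2 : xb = zb → yl = xl) :
    ∀ i j, i < (n+1-xb).toNat → j < (n+1-xl).toNat →
      patF n xb yb zb xl yl zl i j ∈ Tmet n := by
  intro i j hi hj
  have hi' : (i:ℤ) < n + 1 - xb := by omega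
  have hj' : (j:ℤ) < n + 1 - xl := by omega
  unfold patF hcellF
  split_ifs <;>
    first
      | exact junctionT_mem hn (by simp [jPairs, Prod.mk.injEq]; omega)
          (by simp [jPairs, Prod.mk.injEq]; omega) (by omega) (by omega)
      | exact whiteT_mem (by omega) (by omega) (by omega) (by omega)
      | exact blueT_mem (by omega) (by omega)
      | exact greenT_mem (by omega) (by omega)
      | exact yellowT_mem (by omega) (by omega)
      | exact hatBlueT_mem (by omega) (by omega)
      | exact hatGreenT_mem (by omega) (by omega)
      | exact hatYellowT_mem (by omega) (by omega)
      | (exfalso; assumption)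

set_option maxHeartbeats 1000000 in
lemma patF_hadj (n xb yb zb xl yl zl : ℤ) (hn : 1 ≤ n)
    (hb1 : 0 ≤ xb) (hb2 : xb ≤ yb) (hb3 : yb ≤ 1) (hb4 : yb ≤ zb) (hb5 : zb ≤ n + yb)
    (hl1 : 0 ≤ xl) (hl2 : xl ≤ yl) (hl3 : yl ≤ 1) (hl4 : yl ≤ zl) (hl5 : zl ≤ n + yl)
    (hwb : zb ≤ n - 1 → xl = 1) (hwl : zl ≤ n - 1 → xb = 1)
    (hkl : xb = zb → yb = xb) (hrs : xl = zl → yl = xl)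
    (hj1 : xl = zl → yb = xb) (hj2 : xb = zb → yl = xl) :
    ∀ i j, i + 1 < (n+1-xb).toNat → j < (n+1-xl).toNat →
      (patF n xb yb zb xl yl zl i j).right = (patF n xb yb zb xl yl zl (i+1) j).left := by
  intro i j hi hj
  have hi' : (i:ℤ) + 1 < n + 1 - xb := by omega
  have hj' : (j:ℤ) < n + 1 - xl := by omega
  unfold patF hcellF
  split_ifs <;>
      simp only [blueT, greenT, yellowT, whiteT, junctionTile, hatT, WangTile.mk.injEq,
        Prod.mk.injEq, true_and, and_true] <;>
      first
        | (exfalso; assumption)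
        | trivial
        | omega

set_option maxHeartbeats 1000000 in
lemma patF_vadj (n xb yb zb xl yl zl : ℤ) (hn : 1 ≤ n)
    (hb1 : 0 ≤ xb) (hb2 : xb ≤ yb) (hb3 : yb ≤ 1) (hb4 : yb ≤ zb) (hb5 : zb ≤ n + yb)
    (hl1 : 0 ≤ xl) (hl2 : xl ≤ yl) (hl3 : yl ≤ 1) (hl4 : yl ≤ zl) (hl5 : zl ≤ n + yl)
    (hwb : zb ≤ n - 1 → xl = 1) (hwl : zl ≤ n - 1 → xb = 1)
    (hkl : xb = zb → yb = xb) (hrs : xl = zl → yl = xl)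
    (hj1 : xl = zl → yb = xb) (hj2 : xb = zb → yl = xl) :
    ∀ i j, i < (n+1-xb).toNat → j + 1 < (n+1-xl).toNat →
      (patF n xb yb zb xl yl zl i j).top = (patF n xb yb zb xl yl zl i (j+1)).bottom := by
  intro i j hi hj
  have hi' : (i:ℤ) < n + 1 - xb := by omega
  have hj' : (j:ℤ) + 1 < n + 1 - xl := by omega
  unfold patF hcellF
  split_ifs <;>
      simp only [blueT, greenT, yellowT, whiteT, junctionTile, hatT, WangTile.mk.injEq,
        Prod.mk.injEq, true_and, and_true] <;>
      first
        | (exfalso; assumption)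
        | trivial
        | omega

set_option maxHeartbeats 1000000 in
lemma patF_bottom (n xb yb zb xl yl zl : ℤ) (hn : 1 ≤ n)
    (hb1 : 0 ≤ xb) (hb2 : xb ≤ yb) (hb3 : yb ≤ 1) (hb4 : yb ≤ zb) (hb5 : zb ≤ n + yb)
    (hl1 : 0 ≤ xl) (hl2 : xl ≤ yl) (hl3 : yl ≤ 1) (hl4 : yl ≤ zl) (hl5 : zl ≤ n + yl)
    (hwb : zb ≤ n - 1 → xl = 1) (hwl : zl ≤ n - 1 → xb = 1)
    (hkl : xb = zb → yb = xb) (hrs : xl = zl → yl = xl)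
    (hj1 : xl = zl → yb = xb) (hj2 : xb = zb → yl = xl) :
    bottomWord (n+1-xb).toNat (patF n xb yb zb xl yl zl) = tau n (xb, yb, zb) := by
  have hlen : (bottomWord (n+1-xb).toNat (patF n xb yb zb xl yl zl)).length
      = (tau n (xb, yb, zb)).length := by
    rw [tau_length n xb yb zb hn (by omega) (by omega) (by omega) (by omega)]
    simp [bottomWord]
  refine List.ext_getElem hlen ?_
  intro k h1 h2
  rw [tau_getElem n xb yb zb hn (by omega) (by omega) (by omega) (by omega) k h2]
  simp only [bottomWord, List.getElem_map, List.getElem_range]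
  have hk : k < (n+1-xb).toNat := by simpa [bottomWord] using h1
  have hk' : (k:ℤ) < n + 1 - xb := by omega
  unfold patF hcellF
  split_ifs <;>
      simp only [blueT, greenT, yellowT, whiteT, junctionTile, hatT, WangTile.mk.injEq,
        Prod.mk.injEq, true_and, and_true] <;>
      first
        | (exfalso; assumption)
        | trivial
        | omega

set_option maxHeartbeats 1000000 in
lemma patF_left (n xb yb zb xl yl zl : ℤ) (hn : 1 ≤ n)
    (hb1 : 0 ≤ xb) (hb2 : xb ≤ yb) (hb3 : yb ≤ 1) (hb4 : yb ≤ zb) (hb5 : zb ≤ n + yb)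
    (hl1 : 0 ≤ xl) (hl2 : xl ≤ yl) (hl3 : yl ≤ 1) (hl4 : yl ≤ zl) (hl5 : zl ≤ n + yl)
    (hwb : zb ≤ n - 1 → xl = 1) (hwl : zl ≤ n - 1 → xb = 1)
    (hkl : xb = zb → yb = xb) (hrs : xl = zl → yl = xl)
    (hj1 : xl = zl → yb = xb) (hj2 : xb = zb → yl = xl) :
    leftWord (n+1-xl).toNat (patF n xb yb zb xl yl zl) = tau n (xl, yl, zl) := by
  have hlen : (leftWord (n+1-xl).toNat (patF n xb yb zb xl yl zl)).length
      = (tau n (xl, yl, zl)).length := by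
    rw [tau_length n xl yl zl hn (by omega) (by omega) (by omega) (by omega)]
    simp [leftWord]
  refine List.ext_getElem hlen ?_
  intro k h1 h2
  rw [tau_getElem n xl yl zl hn (by omega) (by omega) (by omega) (by omega) k h2]
  simp only [leftWord, List.getElem_map, List.getElem_range]
  have hk : k < (n+1-xl).toNat := by simpa [leftWord] using h1
  have hk' : (k:ℤ) < n + 1 - xl := by omega
  unfold patF hcellF
  split_ifs <;>
      simp only [blueT, greenT, yellowT, whiteT, junctionTile, hatT, WangTile.mk.injEq,
        Prod.mk.injEq, true_and, and_true] <;>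
      first
        | (exfalso; assumption)
        | trivial
        | omega

set_option maxHeartbeats 1000000 in
lemma patF_top (n xb yb zb xl yl zl xt yt zt : ℤ) (hn : 1 ≤ n)
    (hb1 : 0 ≤ xb) (hb2 : xb ≤ yb) (hb3 : yb ≤ 1) (hb4 : yb ≤ zb) (hb5 : zb ≤ n + yb)
    (hl1 : 0 ≤ xl) (hl2 : xl ≤ yl) (hl3 : yl ≤ 1) (hl4 : yl ≤ zl) (hl5 : zl ≤ n + yl)
    (hwb : zb ≤ n - 1 → xl = 1) (hwl : zl ≤ n - 1 → xb = 1)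
    (hkl : xb = zb → yb = xb) (hrs : xl = zl → yl = xl)
    (hj1 : xl = zl → yb = xb) (hj2 : xb = zb → yl = xl)
    (ht0a : xl = 1 → zt - xt = zb - xb + 1) (ht0b : xl = 0 → n ≤ zb ∧ zt ≤ xt + 1)
    (ht1 : xt = xb) (ht2a : zl = n + 1 → yt = xt + 1) (ht2b : zl ≤ n → yt = xt)
    (ht3a : yl = 0 → xt = zt) (ht3b : yl = 1 → xt ≠ zt) (htv : xt ≤ zt ∧ zt ≤ n + 1) :
    topWord (n+1-xb).toNat (n+1-xl).toNat (patF n xb yb zb xl yl zl) = tau n (xt, yt, zt) := by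
  have hlen : (topWord (n+1-xb).toNat (n+1-xl).toNat (patF n xb yb zb xl yl zl)).length
      = (tau n (xt, yt, zt)).length := by
    rw [tau_length n xt yt zt hn (by omega) (by omega) (by omega) (by omega)]
    simp [topWord]; omega
  refine List.ext_getElem hlen ?_
  intro k h1 h2
  rw [tau_getElem n xt yt zt hn (by omega) (by omega) (by omega) (by omega) k h2]
  simp only [topWord, List.getElem_map, List.getElem_range]
  have hk : k < (n+1-xb).toNat := by simpa [topWord] using h1
  have hk' : (k:ℤ) < n + 1 - xb := by omega
  unfold patF hcellF
  split_ifs <;>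
      simp only [blueT, greenT, yellowT, whiteT, junctionTile, hatT, WangTile.mk.injEq,
        Prod.mk.injEq, true_and, and_true] <;>
      first
        | (exfalso; assumption)
        | trivial
        | omega

set_option maxHeartbeats 1000000 in
lemma patF_right (n xb yb zb xl yl zl xr yr zr : ℤ) (hn : 1 ≤ n)
    (hb1 : 0 ≤ xb) (hb2 : xb ≤ yb) (hb3 : yb ≤ 1) (hb4 : yb ≤ zb) (hb5 : zb ≤ n + yb)
    (hl1 : 0 ≤ xl) (hl2 : xl ≤ yl) (hl3 : yl ≤ 1) (hl4 : yl ≤ zl) (hl5 : zl ≤ n + yl)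
    (hwb : zb ≤ n - 1 → xl = 1) (hwl : zl ≤ n - 1 → xb = 1)
    (hkl : xb = zb → yb = xb) (hrs : xl = zl → yl = xl)
    (hj1 : xl = zl → yb = xb) (hj2 : xb = zb → yl = xl)
    (hr0a : xb = 1 → zr - xr = zl - xl + 1) (hr0b : xb = 0 → n ≤ zl ∧ zr ≤ xr + 1)
    (hr1 : xr = xl) (hr2a : zb = n + 1 → yr = xr + 1) (hr2b : zb ≤ n → yr = xr)
    (hr3a : yb = 0 → xr = zr) (hr3b : yb = 1 → xr ≠ zr) (hrv : xr ≤ zr ∧ zr ≤ n + 1) :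
    rightWord (n+1-xb).toNat (n+1-xl).toNat (patF n xb yb zb xl yl zl) = tau n (xr, yr, zr) := by
  have hlen : (rightWord (n+1-xb).toNat (n+1-xl).toNat (patF n xb yb zb xl yl zl)).length
      = (tau n (xr, yr, zr)).length := by
    rw [tau_length n xr yr zr hn (by omega) (by omega) (by omega) (by omega)]
    simp [rightWord]; omega
  refine List.ext_getElem hlen ?_
  intro k h1 h2
  rw [tau_getElem n xr yr zr hn (by omega) (by omega) (by omega) (by omega) k h2]
  simp only [rightWord, List.getElem_map, List.getElem_range]
  have hk : k < (n+1-xl).toNat := by simpa [rightWord] using h1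
  have hk' : (k:ℤ) < n + 1 - xl := by omega
  unfold patF hcellF
  split_ifs <;>
      simp only [blueT, greenT, yellowT, whiteT, junctionTile, hatT, WangTile.mk.injEq,
        Prod.mk.injEq, true_and, and_true] <;>
      first
        | (exfalso; assumption)
        | trivial
        | omega

end Chunk3

section Chunk4

lemma patF_works (n xb yb zb xl yl zl xr yr zr xt yt zt : ℤ) (hn : 1 ≤ n)
    (hb1 : 0 ≤ xb) (hb2 : xb ≤ yb) (hb3 : yb ≤ 1) (hb4 : yb ≤ zb) (hb5 : zb ≤ n + yb)
    (hl1 : 0 ≤ xl) (hl2 : xl ≤ yl) (hl3 : yl ≤ 1) (hl4 : yl ≤ zl) (hl5 : zl ≤ n + yl)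
    (hwb : zb ≤ n - 1 → xl = 1) (hwl : zl ≤ n - 1 → xb = 1)
    (hkl : xb = zb → yb = xb) (hrs : xl = zl → yl = xl)
    (hj1 : xl = zl → yb = xb) (hj2 : xb = zb → yl = xl)
    (ht0a : xl = 1 → zt - xt = zb - xb + 1) (ht0b : xl = 0 → n ≤ zb ∧ zt ≤ xt + 1)
    (ht1 : xt = xb) (ht2a : zl = n + 1 → yt = xt + 1) (ht2b : zl ≤ n → yt = xt)
    (ht3a : yl = 0 → xt = zt) (ht3b : yl = 1 → xt ≠ zt) (htv : xt ≤ zt ∧ zt ≤ n + 1)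
    (hr0a : xb = 1 → zr - xr = zl - xl + 1) (hr0b : xb = 0 → n ≤ zl ∧ zr ≤ xr + 1)
    (hr1 : xr = xl) (hr2a : zb = n + 1 → yr = xr + 1) (hr2b : zb ≤ n → yr = xr)
    (hr3a : yb = 0 → xr = zr) (hr3b : yb = 1 → xr ≠ zr) (hrv : xr ≤ zr ∧ zr ≤ n + 1) :
    ∃ w h q, ValidPattern (Text n) w h q ∧ (∀ i j, i < w → j < h → q i j ∈ Tmet n) ∧
      rightWord w h q = tau n (xr, yr, zr) ∧ topWord w h q = tau n (xt, yt, zt) ∧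
      leftWord h q = tau n (xl, yl, zl) ∧ bottomWord w q = tau n (xb, yb, zb) := by
  refine ⟨(n+1-xb).toNat, (n+1-xl).toNat, patF n xb yb zb xl yl zl,
    ⟨fun i j hi hj => Tmet_sub_Text
        (patF_mem n xb yb zb xl yl zl hn hb1 hb2 hb3 hb4 hb5 hl1 hl2 hl3 hl4 hl5 hwb hwl hkl hrs hj1 hj2 i j hi hj),
      patF_hadj n xb yb zb xl yl zl hn hb1 hb2 hb3 hb4 hb5 hl1 hl2 hl3 hl4 hl5 hwb hwl hkl hrs hj1 hj2,
      patF_vadj n xb yb zb xl yl zl hn hb1 hb2 hb3 hb4 hb5 hl1 hl2 hl3 hl4 hl5 hwb hwl hkl hrs hj1 hj2⟩,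
    patF_mem n xb yb zb xl yl zl hn hb1 hb2 hb3 hb4 hb5 hl1 hl2 hl3 hl4 hl5 hwb hwl hkl hrs hj1 hj2,
    patF_right n xb yb zb xl yl zl xr yr zr hn hb1 hb2 hb3 hb4 hb5 hl1 hl2 hl3 hl4 hl5 hwb hwl hkl hrs hj1 hj2 hr0a hr0b hr1 hr2a hr2b hr3a hr3b hrv,
    patF_top n xb yb zb xl yl zl xt yt zt hn hb1 hb2 hb3 hb4 hb5 hl1 hl2 hl3 hl4 hl5 hwb hwl hkl hrs hj1 hj2 ht0a ht0b ht1 ht2a ht2b ht3a ht3b htv,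
    patF_left n xb yb zb xl yl zl hn hb1 hb2 hb3 hb4 hb5 hl1 hl2 hl3 hl4 hl5 hwb hwl hkl hrs hj1 hj2,
    patF_bottom n xb yb zb xl yl zl hn hb1 hb2 hb3 hb4 hb5 hl1 hl2 hl3 hl4 hl5 hwb hwl hkl hrs hj1 hj2⟩

set_option maxHeartbeats 1000000 in
lemma exists_pattern (n : ℤ) (hn : 1 ≤ n) (a : WangTile Lbl) (ha : a ∈ Tmet n) :
    ∃ w h q, ValidPattern (Text n) w h q ∧ (∀ i j, i < w → j < h → q i j ∈ Tmet n) ∧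
      rightWord w h q = tau n a.right ∧ topWord w h q = tau n a.top ∧
      leftWord h q = tau n a.left ∧ bottomWord w q = tau n a.bottom := by
  obtain ⟨hT, hnr⟩ := ha
  rcases hT with ((((((((h | h) | h) | h) | h) | ⟨x, h, rfl⟩) | ⟨x, h, rfl⟩) | ⟨x, h, rfl⟩) | ⟨x, h, rfl⟩) | h
  · -- white
    obtain ⟨i, j, h1, h2, h3, h4, rfl⟩ := h
    exact patF_works n 1 1 j 1 1 i 1 1 (i+1) 1 1 (j+1) hn (by omega) (by omega) (by omega)
      (by omega) (by omega) (by omega) (by omega) (by omega) (by omega) (by omega) (by omega)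
      (by omega) (by omega) (by omega) (by omega) (by omega) (by omega) (by omega) (by omega)
      (by omega) (by omega) (by omega) (by omega) (by omega) (by omega) (by omega) (by omega)
      (by omega) (by omega) (by omega) (by omega) (by omega)
  · -- blue
    obtain ⟨i, h1, h2, rfl⟩ := h
    have hne : i ≠ n := by
      rintro rfl
      exact hnr (Or.inr (Set.mem_insert _ _))
    exact patF_works n 1 1 n 0 0 i 0 0 (i+1) 1 1 1 hn (by omega) (by omega) (by omega)
      (by omega) (by omega) (by omega) (by omega) (by omega) (by omega) (by omega) (by omega)
      (by omega) (by omega) (by omega) (by omega) (by omega) (by omega) (by omega) (by omega)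
      (by omega) (by omega) (by omega) (by omega) (by omega) (by omega) (by omega) (by omega)
      (by omega) (by omega) (by omega) (by omega) (by omega)
  · -- green
    obtain ⟨i, h1, h2, rfl⟩ := h
    exact patF_works n 1 1 (n+1) 0 0 i 0 1 (i+1) 1 1 1 hn (by omega) (by omega) (by omega)
      (by omega) (by omega) (by omega) (by omega) (by omega) (by omega) (by omega) (by omega)
      (by omega) (by omega) (by omega) (by omega) (by omega) (by omega) (by omega) (by omega)
      (by omega) (by omega) (by omega) (by omega) (by omega) (by omega) (by omega) (by omega)
      (by omega) (by omega) (by omega) (by omega) (by omega)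
  · -- yellow
    obtain ⟨i, h1, h2, rfl⟩ := h
    exact patF_works n 1 1 (n+1) 0 1 i 0 1 (i+1) 1 1 2 hn (by omega) (by omega) (by omega)
      (by omega) (by omega) (by omega) (by omega) (by omega) (by omega) (by omega) (by omega)
      (by omega) (by omega) (by omega) (by omega) (by omega) (by omega) (by omega) (by omega)
      (by omega) (by omega) (by omega) (by omega) (by omega) (by omega) (by omega) (by omega)
      (by omega) (by omega) (by omega) (by omega) (by omega)
  · -- anti: excluded
    exact absurd (Or.inl (Or.inl h)) hnr
  · -- hat blue
    obtain ⟨i, h1, h2, rfl⟩ := h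
    have hne : i ≠ n := by
      rintro rfl
      exact hnr (Or.inr (Set.mem_insert_iff.2 (Or.inr (Set.mem_insert _ _))))
    exact patF_works n 0 0 i 1 1 n 1 1 1 0 0 (i+1) hn (by omega) (by omega) (by omega)
      (by omega) (by omega) (by omega) (by omega) (by omega) (by omega) (by omega) (by omega)
      (by omega) (by omega) (by omega) (by omega) (by omega) (by omega) (by omega) (by omega)
      (by omega) (by omega) (by omega) (by omega) (by omega) (by omega) (by omega) (by omega)
      (by omega) (by omega) (by omega) (by omega) (by omega)
  · -- hat green
    obtain ⟨i, h1, h2, rfl⟩ := h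
    exact patF_works n 0 0 i 1 1 (n+1) 1 1 1 0 1 (i+1) hn (by omega) (by omega) (by omega)
      (by omega) (by omega) (by omega) (by omega) (by omega) (by omega) (by omega) (by omega)
      (by omega) (by omega) (by omega) (by omega) (by omega) (by omega) (by omega) (by omega)
      (by omega) (by omega) (by omega) (by omega) (by omega) (by omega) (by omega) (by omega)
      (by omega) (by omega) (by omega) (by omega) (by omega)
  · -- hat yellow
    obtain ⟨i, h1, h2, rfl⟩ := h
    exact patF_works n 0 1 i 1 1 (n+1) 1 1 2 0 1 (i+1) hn (by omega) (by omega) (by omega)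
      (by omega) (by omega) (by omega) (by omega) (by omega) (by omega) (by omega) (by omega)
      (by omega) (by omega) (by omega) (by omega) (by omega) (by omega) (by omega) (by omega)
      (by omega) (by omega) (by omega) (by omega) (by omega) (by omega) (by omega) (by omega)
      (by omega) (by omega) (by omega) (by omega) (by omega)
  · -- hat anti: excluded
    exact absurd (Or.inl (Or.inr ⟨x, h, rfl⟩)) hnr
  · -- junction
    obtain ⟨K, L, R, S, hKL, hRS, rfl⟩ := h
    simp only [jPairs, Set.mem_insert_iff, Set.mem_singleton_iff, Prod.mk.injEq] at hKL hRS
    have hD1 : ¬(K = 0 ∧ L = 0 ∧ R = 1 ∧ S = 1) := by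
      rintro ⟨rfl, rfl, rfl, rfl⟩
      exact hnr (Or.inr (by simp [Dset]))
    have hD2 : ¬(K = 1 ∧ L = 1 ∧ R = 0 ∧ S = 0) := by
      rintro ⟨rfl, rfl, rfl, rfl⟩
      exact hnr (Or.inr (by simp [Dset]))
    exact patF_works n 0 L (K+n) 0 S (R+n) 0 K L 0 R S hn (by omega) (by omega) (by omega)
      (by omega) (by omega) (by omega) (by omega) (by omega) (by omega) (by omega) (by omega)
      (by omega) (by omega) (by omega) (by omega) (by omega) (by omega) (by omega) (by omega)
      (by omega) (by omega) (by omega) (by omega) (by omega) (by omega) (by omega) (by omega)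
      (by omega) (by omega) (by omega) (by omega) (by omega)

end Chunk4

section Chunk5

lemma list_range_map_sum (m : ℕ) (g : ℕ → ℝ) :
    ((List.range m).map g).sum = ∑ i ∈ Finset.range m, g i := by
  induction m with
  | zero => simp
  | succ m ih => simp [List.range_succ, Finset.sum_range_succ, ih]

set_option maxHeartbeats 1000000 in
lemma column_sum (n : ℤ) (hn : 1 ≤ n)
    (ι : Type) [Fintype ι] [DecidableEq ι]
    (e : ι → WangTile Lbl) (he : Function.Injective e) (hrange : Set.range e = Tmet n)
    (M : Matrix ι ι ℝ)
    (hM : ∀ (a : ι) (w h : ℕ) (q : ℕ → ℕ → WangTile Lbl),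
      ValidPattern (Text n) w h q →
      rightWord w h q = tau n (e a).right → topWord w h q = tau n (e a).top →
      leftWord h q = tau n (e a).left → bottomWord w q = tau n (e a).bottom →
      ∀ b : ι, M b a =
        (((Finset.range w ×ˢ Finset.range h).filter
          fun ij => q ij.1 ij.2 = e b).card : ℝ))
    (a : ι) :
    (∀ b, 0 ≤ M b a) ∧
    ∑ b, (fw n (e b).left * fw n (e b).bottom) * M b a =
      betaMM n ^ 2 * (fw n (e a).left * fw n (e a).bottom) := by
  have haT : e a ∈ Tmet n := by
    rw [← hrange]; exact ⟨a, rfl⟩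
  obtain ⟨w, h, q, hvp, hmem, hrw, htw, hlw, hbw⟩ := exists_pattern n hn (e a) haT
  have hMa := hM a w h q hvp hrw htw hlw hbw
  refine ⟨fun b => by rw [hMa b]; positivity, ?_⟩
  -- abbreviations
  set R := Finset.range w ×ˢ Finset.range h with hR
  set S : WangTile Lbl → ℝ := fun t => fw n t.left * fw n t.bottom with hS
  -- step 1 : each term as a fiber sum
  have step1 : ∀ b : ι, S (e b) * M b a = ∑ p ∈ R.filter (fun p => q p.1 p.2 = e b), S (q p.1 p.2) := by
    intro b
    rw [hMa b]
    rw [Finset.sum_congr rfl (fun p hp => by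
      rw [Finset.mem_filter] at hp
      rw [hp.2] : ∀ p ∈ R.filter (fun p => q p.1 p.2 = e b),
        S (q p.1 p.2) = S (e b))]
    rw [Finset.sum_const, nsmul_eq_mul, mul_comm]
  have hqmem : ∀ p : ℕ × ℕ, p ∈ R → ∃ b, e b = q p.1 p.2 := by
    intro p hp
    rw [hR, Finset.mem_product, Finset.mem_range, Finset.mem_range] at hp
    have := hmem p.1 p.2 hp.1 hp.2
    rwa [← hrange] at this
  -- step 2 : fibers partition R
  have step2 : ∑ b : ι, ∑ p ∈ R.filter (fun p => q p.1 p.2 = e b), S (q p.1 p.2)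
      = ∑ p ∈ R, S (q p.1 p.2) := by
    simp_rw [Finset.sum_filter]
    rw [Finset.sum_comm]
    refine Finset.sum_congr rfl fun p hp => ?_
    obtain ⟨b0, hb0⟩ := hqmem p hp
    have heq : ∀ b : ι, (if q p.1 p.2 = e b then S (q p.1 p.2) else 0)
        = (if b = b0 then S (q p.1 p.2) else 0) := by
      intro b
      refine if_congr ?_ rfl rfl
      constructor
      · intro hqe
        exact (he (hb0.trans hqe)).symm
      · rintro rfl
        exact hb0.symm
    rw [Finset.sum_congr rfl fun b _ => heq b,
      Finset.sum_ite_eq' Finset.univ b0 (fun _ => S (q p.1 p.2)),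
      if_pos (Finset.mem_univ _)]
  -- constancy of fw along columns and rows
  have hconstB : ∀ i j, i < w → j < h → fw n (q i j).bottom = fw n (q i 0).bottom := by
    intro i j hi
    induction j with
    | zero => intro _; rfl
    | succ j ih =>
      intro hj
      have hj' : j < h := by omega
      rw [← hvp.2.2 i j hi hj, ← (fw_invar (hvp.1 i j hi hj')).2, ih hj']
  have hconstL : ∀ i j, i < w → j < h → fw n (q i j).left = fw n (q 0 j).left := by
    intro i j hi hj
    induction i with
    | zero => rfl
    | succ i ih =>
      have hi' : i < w := by omega
      rw [← hvp.2.1 i j hi hj, ← (fw_invar (hvp.1 i j hi' hj)).1, ih hi']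
  -- step 3 : factorization
  have step3 : ∑ p ∈ R, S (q p.1 p.2)
      = (∑ j ∈ Finset.range h, fw n (q 0 j).left) * (∑ i ∈ Finset.range w, fw n (q i 0).bottom) := by
    rw [hR, Finset.sum_product]
    have e1 : ∀ i ∈ Finset.range w, ∀ j ∈ Finset.range h,
        S (q i j) = fw n (q 0 j).left * fw n (q i 0).bottom := by
      intro i hi j hj
      rw [Finset.mem_range] at hi hj
      rw [hS]
      dsimp only
      rw [hconstB i j hi hj, hconstL i j hi hj]
    calc ∑ i ∈ Finset.range w, ∑ j ∈ Finset.range h, S (q (i, j).1 (i, j).2)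
        = ∑ i ∈ Finset.range w, ∑ j ∈ Finset.range h, fw n (q 0 j).left * fw n (q i 0).bottom :=
          Finset.sum_congr rfl fun i hi => Finset.sum_congr rfl fun j hj => e1 i hi j hj
      _ = ∑ i ∈ Finset.range w, (∑ j ∈ Finset.range h, fw n (q 0 j).left) * fw n (q i 0).bottom :=
          Finset.sum_congr rfl fun i _ => (Finset.sum_mul _ _ _).symm
      _ = (∑ j ∈ Finset.range h, fw n (q 0 j).left) * ∑ i ∈ Finset.range w, fw n (q i 0).bottom :=
          (Finset.mul_sum _ _ _).symm
  -- step 4 : boundary sums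
  have hlb := label_bounds hn (Tmet_sub_Text haT)
  have step4L : ∑ j ∈ Finset.range h, fw n (q 0 j).left = betaMM n * fw n (e a).left := by
    rw [← list_range_map_sum]
    have : (List.range h).map (fun j => fw n (q 0 j).left)
        = ((leftWord h q).map (fw n)) := by
      rw [leftWord, List.map_map]; rfl
    rw [this, hlw, tau_map_sum n hn _ hlb.1.1 hlb.1.2.1 hlb.1.2.2.1 hlb.1.2.2.2]
  have step4B : ∑ i ∈ Finset.range w, fw n (q i 0).bottom = betaMM n * fw n (e a).bottom := by
    rw [← list_range_map_sum]
    have : (List.range w).map (fun i => fw n (q i 0).bottom)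
        = ((bottomWord w q).map (fw n)) := by
      rw [bottomWord, List.map_map]; rfl
    rw [this, hbw, tau_map_sum n hn _ hlb.2.1 hlb.2.2.1 hlb.2.2.2.1 hlb.2.2.2.2]
  calc ∑ b, S (e b) * M b a = ∑ p ∈ R, S (q p.1 p.2) := by rw [← step2]; exact Finset.sum_congr rfl fun b _ => step1 b
    _ = (betaMM n * fw n (e a).left) * (betaMM n * fw n (e a).bottom) := by
        rw [step3, step4L, step4B]
    _ = betaMM n ^ 2 * (fw n (e a).left * fw n (e a).bottom) := by ring

end Chunk5

set_option maxHeartbeats 1000000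

/-- `β_n²` is the Perron–Frobenius dominant eigenvalue of the incidence
matrix of `ω_n`. -/
theorem stmt18 (n : ℤ) (hn : 1 ≤ n)
    (ι : Type) [Fintype ι] [DecidableEq ι]
    (e : ι → WangTile Lbl) (he : Function.Injective e) (hrange : Set.range e = Tmet n)
    (M : Matrix ι ι ℝ)
    (hM : ∀ (a : ι) (w h : ℕ) (q : ℕ → ℕ → WangTile Lbl),
      ValidPattern (Text n) w h q →
      rightWord w h q = tau n (e a).right → topWord w h q = tau n (e a).top →
      leftWord h q = tau n (e a).left → bottomWord w q = tau n (e a).bottom →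
      ∀ b : ι, M b a =
        (((Finset.range w ×ˢ Finset.range h).filter
          fun ij => q ij.1 ij.2 = e b).card : ℝ)) :
    (∃ vv : ι → ℝ, vv ≠ 0 ∧ M.mulVec vv = (betaMM n) ^ 2 • vv) ∧
    (∀ μ : ℂ, (∃ vv : ι → ℂ, vv ≠ 0 ∧
        (M.map fun r : ℝ => (r : ℂ)).mulVec vv = μ • vv) →
      ‖μ‖ ≤ (betaMM n) ^ 2) := by
  have hne : Nonempty ι := by
    have hj : junctionTile n 0 0 0 0 ∈ Tmet n :=
      junctionT_mem hn (by simp [jPairs]) (by simp [jPairs]) (by norm_num) (by norm_num)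
    rw [← hrange] at hj
    exact ⟨hj.choose⟩
  set u : ι → ℝ := fun b => fw n (e b).left * fw n (e b).bottom with hu
  have hupos : ∀ b, 0 < u b := fun b =>
    mul_pos (fw_pos n hn _) (fw_pos n hn _)
  have hcol : ∀ a : ι, (∀ b, 0 ≤ M b a) ∧
      ∑ b, u b * M b a = betaMM n ^ 2 * u a := fun a =>
    column_sum n hn ι e he hrange M hM a
  constructor
  · -- existence of a real eigenvector
    have hdetT : (M.transpose - (betaMM n ^ 2) • (1 : Matrix ι ι ℝ)).det = 0 := by
      rw [← Matrix.exists_mulVec_eq_zero_iff]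
      refine ⟨u, ?_, ?_⟩
      · intro h0
        obtain b := Classical.arbitrary ι
        have := congrFun h0 b
        have h2 := hupos b
        rw [this] at h2
        exact lt_irrefl _ h2
      · funext a
        have e1 : (M.transpose - (betaMM n ^ 2) • (1 : Matrix ι ι ℝ)).mulVec u
            = M.transpose.mulVec u - (betaMM n ^ 2) • u := by
          rw [Matrix.sub_mulVec, Matrix.smul_mulVec, Matrix.one_mulVec]
        rw [e1]
        have e2 : M.transpose.mulVec u a = ∑ b, u b * M b a := by
          simp only [Matrix.mulVec, dotProduct, Matrix.transpose_apply]
          exact Finset.sum_congr rfl fun b _ => mul_comm _ _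
        show M.transpose.mulVec u a - ((betaMM n ^ 2) • u) a = 0
        rw [e2, (hcol a).2, Pi.smul_apply, smul_eq_mul, sub_self]
    have hdet : (M - (betaMM n ^ 2) • (1 : Matrix ι ι ℝ)).det = 0 := by
      calc (M - (betaMM n ^ 2) • (1 : Matrix ι ι ℝ)).det
          = ((M - (betaMM n ^ 2) • (1 : Matrix ι ι ℝ)).transpose).det := (Matrix.det_transpose _).symm
        _ = (M.transpose - (betaMM n ^ 2) • (1 : Matrix ι ι ℝ)).det := by
            rw [Matrix.transpose_sub, Matrix.transpose_smul, Matrix.transpose_one]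
        _ = 0 := hdetT
    obtain ⟨v, hv0, hveq⟩ := Matrix.exists_mulVec_eq_zero_iff.2 hdet
    refine ⟨v, hv0, ?_⟩
    rwa [Matrix.sub_mulVec, Matrix.smul_mulVec, Matrix.one_mulVec, sub_eq_zero] at hveq
  · -- spectral radius bound
    rintro μ ⟨v, hv0, hveq⟩
    obtain ⟨b0, hb0⟩ := Function.ne_iff.1 hv0
    set W : ℝ := ∑ b, u b * ‖v b‖ with hW
    have hWpos : 0 < W := by
      refine Finset.sum_pos'
        (fun b _ => mul_nonneg (le_of_lt (hupos b)) (norm_nonneg _))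
        ⟨b0, Finset.mem_univ _, ?_⟩
      have h2 : 0 < ‖v b0‖ := by
        exact norm_pos_iff.2 hb0
      exact mul_pos (hupos b0) h2
    have hMnn : ∀ b j, 0 ≤ M b j := fun b j => (hcol j).1 b
    have hrow : ∀ b, ‖μ‖ * ‖v b‖ ≤ ∑ j, M b j * ‖v j‖ := by
      intro b
      have h1 : ∑ j, (M b j : ℂ) * v j = μ * v b := by
        have := congrFun hveq b
        simpa [Matrix.mulVec, dotProduct, Matrix.map_apply, Pi.smul_apply,
          smul_eq_mul] using this
      calc ‖μ‖ * ‖v b‖ = ‖μ * v b‖ := (norm_mul _ _).symm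
        _ = ‖∑ j, (M b j : ℂ) * v j‖ := by rw [h1]
        _ ≤ ∑ j, ‖(M b j : ℂ) * v j‖ := norm_sum_le _ _
        _ = ∑ j, M b j * ‖v j‖ := by
            refine Finset.sum_congr rfl fun j _ => ?_
            rw [norm_mul, Complex.norm_real, Real.norm_eq_abs, abs_of_nonneg (hMnn b j)]
    have hchain : ‖μ‖ * W ≤ betaMM n ^ 2 * W := by
      calc ‖μ‖ * W = ∑ b, u b * (‖μ‖ * ‖v b‖) := by
            rw [hW, Finset.mul_sum]
            exact Finset.sum_congr rfl fun b _ => by ring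
        _ ≤ ∑ b, u b * ∑ j, M b j * ‖v j‖ :=
            Finset.sum_le_sum fun b _ =>
              mul_le_mul_of_nonneg_left (hrow b) (le_of_lt (hupos b))
        _ = ∑ j, (∑ b, u b * M b j) * ‖v j‖ := by
            simp_rw [Finset.mul_sum]
            rw [Finset.sum_comm]
            refine Finset.sum_congr rfl fun j _ => ?_
            rw [Finset.sum_mul]
            exact Finset.sum_congr rfl fun b _ => by ring
        _ = ∑ j, betaMM n ^ 2 * (u j * ‖v j‖) := by
            refine Finset.sum_congr rfl fun j _ => ?_
            rw [(hcol j).2]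
            ring
        _ = betaMM n ^ 2 * W := by
            rw [hW, Finset.mul_sum]
    exact le_of_mul_le_mul_right hchain hWpos
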